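/- Let q ≥ 2 and ζ be the non-primitive binary constant-length-q substitution with ζ(1) = 1^q and ζ(0) starting with 0, containing the letter 1 and at least one more 0. Let x = ζ^∞(0). Then for every ℓ ∈ ℕ, the triple ⟨0, 1^ℓ, 1⟩ is an inner line-pattern of x with infinitely many witnessing pairs: there are infinitely many pairs (i,j) ∈ ℕ² with x_{[i−1, i+ℓ+1)} = 0·1^ℓ·1 and x_{[j−1, j+ℓ+1)} = 1·1^ℓ·0. -/

import Mathlib

/-- Let `q ≥ 2` and let `ζ` be the non-primitive binary constant-length-`q`
substitution with `ζ(1) = 1^q` and `ζ(0)` starting with `0`, containing the letter `1`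
and at least one further `0` (so `ζ(0)` contains at least two `0`s).  Let
`x = ζ^∞(0)` be the fixed point.  Then for every `ℓ ≥ 1`, the triple `⟨0, 1^ℓ, 1⟩` is an
inner line-pattern with infinitely many witnessing pairs `(i,j)`: infinitely many pairs
with `x_{[i-1, i+ℓ+1)} = 0·1^ℓ·1` and `x_{[j-1, j+ℓ+1)} = 1·1^ℓ·0`. -/
theorem stmt_14 (q : ℕ) (hq : 2 ≤ q) (ζ : Bool → List Bool)
    (hlen : ∀ c, (ζ c).length = q)
    (hζ1 : ζ true = List.replicate q true)
    (hζ00 : (ζ false).getD 0 false = false)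
    (h1in : true ∈ ζ false)
    (h2zeros : 2 ≤ (ζ false).count false)
    (x : ℕ → Bool) (hx0 : x 0 = false)
    (hfix : ∀ k t, t < q → x (k * q + t) = (ζ (x k)).getD t false) :
    ∀ ℓ : ℕ, 1 ≤ ℓ →
      {ij : ℕ × ℕ | 1 ≤ ij.1 ∧ 1 ≤ ij.2 ∧
        x (ij.1 - 1) = false ∧ (∀ h < ℓ, x (ij.1 + h) = true) ∧ x (ij.1 + ℓ) = true ∧
        x (ij.2 - 1) = true ∧ (∀ h < ℓ, x (ij.2 + h) = true) ∧
        x (ij.2 + ℓ) = false}.Infinite := by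
  intro ℓ hℓ
  have hq0 : 0 < q := by omega
  -- Lemma A: images of a `true` letter are all `true`.
  have lemA : ∀ k m t, x m = true → t < q ^ k → x (m * q ^ k + t) = true := by
    intro k
    induction k with
    | zero =>
      intro m t hm ht
      simp only [pow_zero, Nat.lt_one_iff] at ht
      subst ht
      simpa using hm
    | succ k ih =>
      intro m t hm ht
      have hdiv : t / q < q ^ k := by
        rw [Nat.div_lt_iff_lt_mul hq0]
        calc t < q ^ (k + 1) := ht
          _ = q ^ k * q := by ring
      have key : (m * q ^ k + t / q) * q + t % q = m * q ^ (k + 1) + t := by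
        have h2 : (m * q ^ k + t / q) * q + t % q
            = m * (q ^ k * q) + (q * (t / q) + t % q) := by ring
        rw [h2, Nat.div_add_mod, ← pow_succ]
      rw [← key, hfix _ _ (Nat.mod_lt _ hq0), ih m (t / q) hm hdiv, hζ1]
      have hmod : t % q < q := Nat.mod_lt _ hq0
      rw [List.getD_eq_getElem _ _ (by simpa using hmod)]
      simp
  -- Lemma B: the image of a `false` letter starts with `false`.
  have lemB : ∀ k m, x m = false → x (m * q ^ k) = false := by
    intro k
    induction k with
    | zero => intro m hm; simpa using hm
    | succ k ih =>
      intro m hm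
      have : m * q ^ (k + 1) = (m * q ^ k) * q + 0 := by ring
      rw [this, hfix _ _ hq0, ih m hm, hζ00]
  -- the first `true` in x
  have hex : ∃ t, x t = true := by
    obtain ⟨n, hn, hval⟩ := List.mem_iff_getElem.mp h1in
    refine ⟨n, ?_⟩
    have hnq : n < q := by rwa [hlen] at hn
    have := hfix 0 n hnq
    rw [hx0] at this
    simp only [Nat.zero_mul, Nat.zero_add] at this
    rw [this, List.getD_eq_getElem _ _ hn, hval]
  set p := Nat.find hex with hp_def
  have hp : x p = true := Nat.find_spec hex
  have hp_pos : 1 ≤ p := by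
    rcases Nat.eq_zero_or_pos p with h | h
    · rw [h, hx0] at hp; exact absurd hp (by simp)
    · exact h
  have hpm1 : x (p - 1) = false := by
    have := Nat.find_min hex (m := p - 1) (by omega)
    simpa using this
  -- a second `false` position in ζ false
  have hsecond : ∃ s, 1 ≤ s ∧ s < q ∧ (ζ false).getD s false = false := by
    obtain ⟨c, t, hct⟩ : ∃ c t, ζ false = c :: t := by
      rcases hl : ζ false with _ | ⟨c, t⟩
      · exfalso; have := hlen false; rw [hl] at this; simp at this; omega
      · exact ⟨c, t, rfl⟩
    have hc : c = false := by
      have := hζ00; rw [hct] at this; simpa using this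
    have htcount : 1 ≤ t.count false := by
      have h' : List.count false (ζ false) = List.count false t + 1 := by
        rw [hct, hc]; simp
      omega
    have hmem : false ∈ t := by
      rw [← List.count_pos_iff]; omega
    obtain ⟨n, hn, hval⟩ := List.mem_iff_getElem.mp hmem
    refine ⟨n + 1, by omega, ?_, ?_⟩
    · have := hlen false; rw [hct] at this; simp at this; omega
    · rw [hct]
      show (c :: t).getD (n + 1) false = false
      rw [List.getD_cons_succ, List.getD_eq_getElem _ _ hn, hval]
  obtain ⟨s, hs1, hsq, hsval⟩ := hsecond
  -- unboundedly many `false` positions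
  have hub : ∀ N, ∃ m, N ≤ m ∧ x m = false := by
    intro N
    induction N with
    | zero => exact ⟨0, le_refl _, hx0⟩
    | succ N ih =>
      obtain ⟨m, hm, hmf⟩ := ih
      refine ⟨m * q + s, ?_, ?_⟩
      · have : m ≤ m * q := Nat.le_mul_of_pos_right m hq0
        omega
      · rw [hfix m s hsq, hmf, hsval]
  -- a `true → false` transition
  obtain ⟨c, hc, hcf⟩ := hub (p + 1)
  have hexb : ∃ n, x (p + 1 + n) = false := ⟨c - (p + 1), by rwa [Nat.add_sub_cancel' hc]⟩
  set n0 := Nat.find hexb with hn0_def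
  set b := p + n0 with hb_def
  have hb1 : x (b + 1) = false := by
    have := Nat.find_spec hexb
    have he : b + 1 = p + 1 + n0 := by omega
    rwa [he]
  have hb : x b = true := by
    rcases Nat.eq_zero_or_pos n0 with h | h
    · have : b = p := by omega
      rw [this]; exact hp
    · have := Nat.find_min hexb (m := n0 - 1) (by omega)
      have he : b = p + 1 + (n0 - 1) := by omega
      rw [he]
      simpa using this
  -- set up the injection
  have hpowbig : ∀ n : ℕ, ℓ + 1 ≤ q ^ (ℓ + n) := by
    intro n
    have h1 : ℓ < 2 ^ ℓ := Nat.lt_two_pow_self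
    have h2 : (2:ℕ) ^ ℓ ≤ 2 ^ (ℓ + n) := Nat.pow_le_pow_right (by norm_num) (by omega)
    have h3 : (2:ℕ) ^ (ℓ + n) ≤ q ^ (ℓ + n) := Nat.pow_le_pow_left hq _
    omega
  set a := p - 1 with ha_def
  have ha : x a = false := hpm1
  have hap : a + 1 = p := by omega
  apply Set.infinite_of_injective_forall_mem
    (f := fun n : ℕ =>
      (Nat.findGreatest (fun m => x m = false) ((a + 1) * q ^ (ℓ + n) - 1) + 1,
       (b + 1) * q ^ (ℓ + n) - ℓ))
  · -- injectivity via the second coordinate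
    intro n m hnm
    by_contra hne
    have hlt : ∀ u v : ℕ, u < v →
        (b + 1) * q ^ (ℓ + u) - ℓ < (b + 1) * q ^ (ℓ + v) - ℓ := by
      intro u v huv
      have h1 : q ^ (ℓ + u) < q ^ (ℓ + v) :=
        Nat.pow_lt_pow_right (by omega) (by omega)
      have h2 : (b + 1) * q ^ (ℓ + u) < (b + 1) * q ^ (ℓ + v) :=
        mul_lt_mul_of_pos_left h1 (by omega)
      have h3 := hpowbig u
      have h4 : q ^ (ℓ + u) ≤ (b + 1) * q ^ (ℓ + u) :=
        Nat.le_mul_of_pos_left _ (by omega)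
      omega
    rcases Nat.lt_or_ge n m with h | h
    · have := hlt n m h
      have := congrArg Prod.snd hnm
      simp at this
      omega
    · have hmn : m < n := by omega
      have := hlt m n hmn
      have := congrArg Prod.snd hnm
      simp at this
      omega
  · -- membership
    intro n
    set k := ℓ + n with hk_def
    have hk : ℓ + 1 ≤ q ^ k := hpowbig n
    set B := (a + 1) * q ^ k - 1 with hB_def
    set f := Nat.findGreatest (fun m => x m = false) B with hf_def
    have hqk1 : 1 ≤ q ^ k := by omega
    have hA : a * q ^ k + q ^ k = (a + 1) * q ^ k := by ring
    have hBv : b * q ^ k + q ^ k = (b + 1) * q ^ k := by ring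
    have haB : a * q ^ k ≤ B := by
      have : a * q ^ k + q ^ k = (a + 1) * q ^ k := by ring
      omega
    have hfspec : x f = false := by
      have := Nat.findGreatest_spec (P := fun m => x m = false) haB (lemB k a ha)
      simpa using this
    have hfle : f ≤ B := Nat.findGreatest_le B
    have hitrue : ∀ t, t ≤ ℓ → x (f + 1 + t) = true := by
      intro t htℓ
      rcases Nat.lt_or_ge B (f + 1 + t) with h | h
      · -- in the image of `a+1`
        have hub2 : f + 1 + t < (a + 1) * q ^ k + q ^ k := by omega
        have heq : f + 1 + t = (a + 1) * q ^ k + (f + 1 + t - (a + 1) * q ^ k) := by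
          omega
        rw [heq]
        exact lemA k (a + 1) _ (by rw [hap]; exact hp) (by omega)
      · have := Nat.findGreatest_is_greatest (P := fun m => x m = false)
          (n := B) (k := f + 1 + t) (by omega) h
        simpa using this
    have hj1 : q ^ k ≤ (b + 1) * q ^ k := Nat.le_mul_of_pos_left _ (by omega)
    have hjtrue : ∀ t, t ≤ ℓ → x ((b + 1) * q ^ k - ℓ - 1 + t) = true := by
      intro t htℓ
      have heq : (b + 1) * q ^ k - ℓ - 1 + t
          = b * q ^ k + ((b + 1) * q ^ k - ℓ - 1 + t - b * q ^ k) := by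
        have : b * q ^ k + q ^ k = (b + 1) * q ^ k := by ring
        omega
      rw [heq]
      refine lemA k b _ hb ?_
      have : b * q ^ k + q ^ k = (b + 1) * q ^ k := by ring
      omega
    refine ⟨by omega, by omega, ?_, ?_, ?_, ?_, ?_, ?_⟩
    · simpa using hfspec
    · intro h hh
      have := hitrue h (by omega)
      simpa [Nat.add_assoc, Nat.add_comm, Nat.add_left_comm] using this
    · have := hitrue ℓ (le_refl _)
      simpa [Nat.add_assoc, Nat.add_comm, Nat.add_left_comm] using this
    · have := hjtrue 0 (by omega)
      simp only [Nat.add_zero] at this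
      have he : (b + 1) * q ^ k - ℓ - 1 = (b + 1) * q ^ k - ℓ - 1 + 0 := by omega
      simpa using this
    · intro h hh
      have := hjtrue (h + 1) (by omega)
      have he : (b + 1) * q ^ k - ℓ - 1 + (h + 1) = (b + 1) * q ^ k - ℓ + h := by
        omega
      rwa [he] at this
    · have he : (b + 1) * q ^ k - ℓ + ℓ = (b + 1) * q ^ k := by omega
      rw [he]
      exact lemB k (b + 1) hb1
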